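/- arXiv:1610.02587 — 2 statements merged into one kernel-verified Lean document; each statement's English description precedes it below -/
import Mathlib

section
/- Let (Ω, F, P) be a probability space, let L²(Ω; ℝᵏ) denote the Hilbert space of (equivalence classes of) square-integrable ℝᵏ-valued random vectors on it, and let Q₁ and Q₂ be symmetric real k×k matrices such that Q₁ and Q₁ + Q₂ are positive semidefinite. Then the functional f : L²(Ω; ℝᵏ) → ℝ defined by f(u) = E[⟨Q₁u, u⟩] + ⟨Q₂E[u], E[u]⟩ is convex. -/
open MeasureTheory Matrix RealInnerProductSpace

variable {k : ℕ}

lemma mfq_symm_inner (Q : Matrix (Fin k) (Fin k) ℝ) (hs : Q.IsSymm)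
    (x y : EuclideanSpace ℝ (Fin k)) :
    ⟪Matrix.toEuclideanLin Q x, y⟫ = ⟪Matrix.toEuclideanLin Q y, x⟫ := by
  have hH : Q.IsHermitian := by
    rw [Matrix.IsHermitian, Matrix.conjTranspose_eq_transpose_of_trivial]; exact hs
  have hsym := Matrix.isHermitian_iff_isSymmetric.mp hH
  rw [hsym x y, real_inner_comm]

lemma mfq_psd_inner (Q : Matrix (Fin k) (Fin k) ℝ) (hQ : Q.PosSemidef)
    (x : EuclideanSpace ℝ (Fin k)) :
    0 ≤ ⟪Matrix.toEuclideanLin Q x, x⟫ := by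
  have h := (Matrix.posSemidef_iff_dotProduct_mulVec.mp hQ).2 ((WithLp.equiv 2 _) x)
  rw [real_inner_comm]
  simpa [EuclideanSpace.inner_eq_star_dotProduct,
    dotProduct_comm (Q *ᵥ WithLp.ofLp x) (WithLp.ofLp x)] using h

/-- Convexity of the mean-field quadratic functional
`f(u) = E[⟨Q₁u, u⟩] + ⟨Q₂ E[u], E[u]⟩` on `L²(Ω; ℝᵏ)`, when `Q₁`, `Q₂` are
symmetric and `Q₁`, `Q₁ + Q₂` are positive semidefinite. -/
theorem meanField_quadratic_convex
    {Ω : Type*} [MeasurableSpace Ω] (μ : Measure Ω) [IsProbabilityMeasure μ]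
    {k : ℕ} (Q₁ Q₂ : Matrix (Fin k) (Fin k) ℝ)
    (hQ₁s : Q₁.IsSymm) (hQ₂s : Q₂.IsSymm)
    (hQ₁ : Q₁.PosSemidef) (hQ₁₂ : (Q₁ + Q₂).PosSemidef)
    (f : Lp (EuclideanSpace ℝ (Fin k)) 2 μ → ℝ)
    (hf : ∀ u : Lp (EuclideanSpace ℝ (Fin k)) 2 μ,
      f u = (∫ ω, ⟪Matrix.toEuclideanLin Q₁ (u ω), u ω⟫ ∂μ)
        + ⟪Matrix.toEuclideanLin Q₂ (∫ ω, u ω ∂μ), ∫ ω, u ω ∂μ⟫) :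
    ConvexOn ℝ (Set.univ : Set (Lp (EuclideanSpace ℝ (Fin k)) 2 μ)) f := by
  set T₁ := Matrix.toEuclideanLin Q₁ with hT₁
  set T₂ := Matrix.toEuclideanLin Q₂ with hT₂
  -- basic integrability
  have hint : ∀ u : Lp (EuclideanSpace ℝ (Fin k)) 2 μ, Integrable (fun ω => u ω) μ := fun u =>
    (Lp.memLp u).integrable (by norm_num)
  have hII : ∀ (Q : Matrix (Fin k) (Fin k) ℝ) (u v : Lp (EuclideanSpace ℝ (Fin k)) 2 μ),
      Integrable (fun ω => ⟪Matrix.toEuclideanLin Q (u ω), v ω⟫) μ := by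
    intro Q u v
    have h := L2.integrable_inner (𝕜 := ℝ)
      ((LinearMap.toContinuousLinearMap (Matrix.toEuclideanLin Q)).compLp u) v
    refine h.congr ?_
    filter_upwards [ContinuousLinearMap.coeFn_compLp
      (LinearMap.toContinuousLinearMap (Matrix.toEuclideanLin Q)) u] with ω hω
    rw [hω]
    simp
  -- the bilinear form
  set B : Lp (EuclideanSpace ℝ (Fin k)) 2 μ → Lp (EuclideanSpace ℝ (Fin k)) 2 μ → ℝ := fun u v =>
    (∫ ω, ⟪T₁ (u ω), v ω⟫ ∂μ) + ⟪T₂ (∫ ω, u ω ∂μ), ∫ ω, v ω ∂μ⟫ with hB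
  have hfB : ∀ u, f u = B u u := fun u => hf u
  -- pointwise value of a combination
  have hcomb : ∀ (a b : ℝ) (u v : Lp (EuclideanSpace ℝ (Fin k)) 2 μ),
      (a • u + b • v : Lp (EuclideanSpace ℝ (Fin k)) 2 μ)
        =ᵐ[μ] fun ω => a • u ω + b • v ω := by
    intro a b u v
    filter_upwards [Lp.coeFn_add (a • u) (b • v), Lp.coeFn_smul a u, Lp.coeFn_smul b v]
      with ω h1 h2 h3
    simp only [h1, Pi.add_apply, h2, h3, Pi.smul_apply]
  have hmean : ∀ (a b : ℝ) (u v : Lp (EuclideanSpace ℝ (Fin k)) 2 μ),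
      (∫ ω, (a • u + b • v : Lp (EuclideanSpace ℝ (Fin k)) 2 μ) ω ∂μ)
        = a • (∫ ω, u ω ∂μ) + b • (∫ ω, v ω ∂μ) := by
    intro a b u v
    calc (∫ ω, (a • u + b • v : Lp (EuclideanSpace ℝ (Fin k)) 2 μ) ω ∂μ)
        = ∫ ω, (a • u ω + b • v ω) ∂μ := integral_congr_ae (hcomb a b u v)
      _ = (∫ ω, a • u ω ∂μ) + ∫ ω, b • v ω ∂μ :=
          integral_add ((hint u).smul a) ((hint v).smul b)
      _ = a • (∫ ω, u ω ∂μ) + b • (∫ ω, v ω ∂μ) := by rw [integral_smul, integral_smul]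
  -- expansion of the quadratic form
  have hexp : ∀ (a b : ℝ) (u v : Lp (EuclideanSpace ℝ (Fin k)) 2 μ),
      B (a • u + b • v) (a • u + b • v)
        = a * a * B u u + 2 * (a * b) * B u v + b * b * B v v := by
    intro a b u v
    have key : ∀ ω, (a • (u ω) + b • (v ω) : EuclideanSpace ℝ (Fin k)) = a • u ω + b • v ω :=
      fun _ => rfl
    have h1 : (∫ ω, ⟪T₁ ((a • u + b • v : Lp (EuclideanSpace ℝ (Fin k)) 2 μ) ω),
          (a • u + b • v : Lp (EuclideanSpace ℝ (Fin k)) 2 μ) ω⟫ ∂μ)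
        = a * a * (∫ ω, ⟪T₁ (u ω), u ω⟫ ∂μ)
          + 2 * (a * b) * (∫ ω, ⟪T₁ (u ω), v ω⟫ ∂μ)
          + b * b * (∫ ω, ⟪T₁ (v ω), v ω⟫ ∂μ) := by
      calc (∫ ω, ⟪T₁ ((a • u + b • v : Lp (EuclideanSpace ℝ (Fin k)) 2 μ) ω),
              (a • u + b • v : Lp (EuclideanSpace ℝ (Fin k)) 2 μ) ω⟫ ∂μ)
          = ∫ ω, (a * a * ⟪T₁ (u ω), u ω⟫
              + 2 * (a * b) * ⟪T₁ (u ω), v ω⟫ + b * b * ⟪T₁ (v ω), v ω⟫) ∂μ := by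
            refine integral_congr_ae ?_
            filter_upwards [hcomb a b u v] with ω hω
            rw [hω]
            have hsy := mfq_symm_inner Q₁ hQ₁s (u ω) (v ω)
            simp only [← hT₁] at hsy
            simp only [_root_.map_add, _root_.map_smul, inner_add_left, inner_add_right,
              real_inner_smul_left, real_inner_smul_right]
            rw [← hsy]
            ring
        _ = (∫ ω, (a * a * ⟪T₁ (u ω), u ω⟫ + 2 * (a * b) * ⟪T₁ (u ω), v ω⟫) ∂μ)
              + ∫ ω, b * b * ⟪T₁ (v ω), v ω⟫ ∂μ :=
            integral_add (((hII Q₁ u u).const_mul _).add ((hII Q₁ u v).const_mul _))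
              ((hII Q₁ v v).const_mul _)
        _ = (∫ ω, a * a * ⟪T₁ (u ω), u ω⟫ ∂μ) + (∫ ω, 2 * (a * b) * ⟪T₁ (u ω), v ω⟫ ∂μ)
              + ∫ ω, b * b * ⟪T₁ (v ω), v ω⟫ ∂μ := by
            rw [integral_add ((hII Q₁ u u).const_mul _) ((hII Q₁ u v).const_mul _)]
        _ = a * a * (∫ ω, ⟪T₁ (u ω), u ω⟫ ∂μ)
              + 2 * (a * b) * (∫ ω, ⟪T₁ (u ω), v ω⟫ ∂μ)
              + b * b * (∫ ω, ⟪T₁ (v ω), v ω⟫ ∂μ) := by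
            rw [integral_const_mul _ _, integral_const_mul _ _, integral_const_mul _ _]
    have h2 : ⟪T₂ (∫ ω, (a • u + b • v : Lp (EuclideanSpace ℝ (Fin k)) 2 μ) ω ∂μ),
          ∫ ω, (a • u + b • v : Lp (EuclideanSpace ℝ (Fin k)) 2 μ) ω ∂μ⟫
        = a * a * ⟪T₂ (∫ ω, u ω ∂μ), ∫ ω, u ω ∂μ⟫
          + 2 * (a * b) * ⟪T₂ (∫ ω, u ω ∂μ), ∫ ω, v ω ∂μ⟫
          + b * b * ⟪T₂ (∫ ω, v ω ∂μ), ∫ ω, v ω ∂μ⟫ := by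
      rw [hmean a b u v]
      have hsy := mfq_symm_inner Q₂ hQ₂s (∫ ω, u ω ∂μ) (∫ ω, v ω ∂μ)
      simp only [← hT₂] at hsy
      simp only [_root_.map_add, _root_.map_smul, inner_add_left, inner_add_right,
        real_inner_smul_left, real_inner_smul_right]
      rw [← hsy]
      ring
    simp only [hB]
    rw [h1, h2]
    ring
  -- nonnegativity of B w w
  have hnn : ∀ w : Lp (EuclideanSpace ℝ (Fin k)) 2 μ, 0 ≤ B w w := by
    intro w
    set m := ∫ ω, w ω ∂μ with hm
    have hptw : ∀ ω : Ω, ⟪T₁ (w ω - m), w ω - m⟫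
        = ⟪T₁ (w ω), w ω⟫ - 2 * ⟪T₁ m, w ω⟫ + ⟪T₁ m, m⟫ := by
      intro ω
      have hsy := mfq_symm_inner Q₁ hQ₁s (w ω) m
      simp only [← hT₁] at hsy
      simp only [_root_.map_sub, inner_sub_left, inner_sub_right]
      rw [← hsy]
      ring
    have hIc : Integrable (fun ω => ⟪T₁ m, w ω⟫) μ := (hint w).const_inner _
    have hIm : (∫ ω, ⟪T₁ m, w ω⟫ ∂μ) = ⟪T₁ m, m⟫ := by
      rw [integral_inner (hint w)]
    have hkey : (∫ ω, ⟪T₁ (w ω - m), w ω - m⟫ ∂μ)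
        = (∫ ω, ⟪T₁ (w ω), w ω⟫ ∂μ) - ⟪T₁ m, m⟫ := by
      calc (∫ ω, ⟪T₁ (w ω - m), w ω - m⟫ ∂μ)
          = ∫ ω, ((⟪T₁ (w ω), w ω⟫ - 2 * ⟪T₁ m, w ω⟫) + ⟪T₁ m, m⟫) ∂μ :=
            integral_congr_ae (Filter.Eventually.of_forall hptw)
        _ = (∫ ω, (⟪T₁ (w ω), w ω⟫ - 2 * ⟪T₁ m, w ω⟫) ∂μ)
              + ∫ (_ : Ω), ⟪T₁ m, m⟫ ∂μ :=
            integral_add ((hII Q₁ w w).sub (hIc.const_mul 2)) (integrable_const _)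
        _ = ((∫ ω, ⟪T₁ (w ω), w ω⟫ ∂μ) - ∫ ω, 2 * ⟪T₁ m, w ω⟫ ∂μ)
              + ∫ (_ : Ω), ⟪T₁ m, m⟫ ∂μ := by
            rw [integral_sub (hII Q₁ w w) (hIc.const_mul 2)]
        _ = (∫ ω, ⟪T₁ (w ω), w ω⟫ ∂μ) - ⟪T₁ m, m⟫ := by
            rw [integral_const_mul _ _, hIm, integral_const]
            simp only [probReal_univ, one_smul]
            ring
    have h12 : ⟪T₁ m, m⟫ + ⟪T₂ m, m⟫ = ⟪Matrix.toEuclideanLin (Q₁ + Q₂) m, m⟫ := by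
      rw [_root_.map_add, LinearMap.add_apply, inner_add_left, ← hT₁, ← hT₂]
    have hpos1 : 0 ≤ ∫ ω, ⟪T₁ (w ω - m), w ω - m⟫ ∂μ :=
      integral_nonneg fun ω => mfq_psd_inner Q₁ hQ₁ _
    have hpos2 : 0 ≤ ⟪Matrix.toEuclideanLin (Q₁ + Q₂) m, m⟫ :=
      mfq_psd_inner _ hQ₁₂ m
    have hBw : B w w = (∫ ω, ⟪T₁ (w ω - m), w ω - m⟫ ∂μ)
        + ⟪Matrix.toEuclideanLin (Q₁ + Q₂) m, m⟫ := by
      simp only [hB]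
      rw [hkey, ← h12, ← hm]
      ring
    rw [hBw]
    exact add_nonneg hpos1 hpos2
  -- conclude convexity
  refine ⟨convex_univ, ?_⟩
  intro u _ v _ a b ha hb hab
  have hd : B (u - v) (u - v) = B u u - 2 * B u v + B v v := by
    have h := hexp 1 (-1) u v
    rw [one_smul, neg_one_smul, ← sub_eq_add_neg] at h
    rw [h]; ring
  have h0 : 0 ≤ a * b * (B u u - 2 * B u v + B v v) := by
    rw [← hd]; exact mul_nonneg (mul_nonneg ha hb) (hnn _)
  simp only [smul_eq_mul]
  rw [hfB, hfB, hfB, hexp a b u v]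
  have hEq : a * B u u + b * B v v - (a * a * B u u + 2 * (a * b) * B u v + b * b * B v v)
      = a * b * (B u u - 2 * B u v + B v v) := by
    have hb1 : b = 1 - a := by linarith
    subst hb1
    ring
  linarith [h0, hEq]
end

section
/- Let (Ω, F, P) be a probability space, let L²(Ω; ℝᵏ) denote the Hilbert space of (equivalence classes of) square-integrable ℝᵏ-valued random vectors on it, let δ > 0, and let N₁ and N₂ be symmetric real k×k matrices such that ⟨N₁v, v⟩ ≥ δ|v|² and ⟨(N₁ + N₂)v, v⟩ ≥ δ|v|² for all v ∈ ℝᵏ. Then the functional f : L²(Ω; ℝᵏ) → ℝ defined by f(u) = E[⟨N₁u, u⟩] + ⟨N₂E[u], E[u]⟩ is strictly convex: for all u ≠ v in L²(Ω; ℝᵏ) and all λ ∈ (0,1), f(λu + (1−λ)v) < λf(u) + (1−λ)f(v). -/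
open MeasureTheory Matrix RealInnerProductSpace

private lemma quadCombo {E : Type*} [NormedAddCommGroup E] [InnerProductSpace ℝ E]
    (T : E →L[ℝ] E) (a b : E) (s t : ℝ) (hst : s + t = 1) :
    ⟪T (s • a + t • b), s • a + t • b⟫
      = s * ⟪T a, a⟫ + t * ⟪T b, b⟫ - s * t * ⟪T (a - b), a - b⟫ := by
  simp only [map_add, _root_.map_smul, map_sub, inner_add_left, inner_add_right,
    inner_sub_left, inner_sub_right, real_inner_smul_left, real_inner_smul_right]
  linear_combination (s * ⟪T a, a⟫ + t * ⟪T b, b⟫) * hst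

private lemma integrableQuad {Ω : Type*} [MeasurableSpace Ω] {μ : Measure Ω}
    {E : Type*} [NormedAddCommGroup E] [InnerProductSpace ℝ E]
    (T : E →L[ℝ] E) (u v : Lp E 2 μ) :
    Integrable (fun ω => ⟪T (u ω), v ω⟫) μ := by
  refine (MeasureTheory.L2.integrable_inner (𝕜 := ℝ) (T.compLp u) v).congr ?_
  filter_upwards [ContinuousLinearMap.coeFn_compLp T u] with ω h
  rw [h]

private lemma shiftIdentity {Ω : Type*} [MeasurableSpace Ω] {μ : Measure Ω}
    [IsProbabilityMeasure μ]
    {E : Type*} [NormedAddCommGroup E] [InnerProductSpace ℝ E] [CompleteSpace E]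
    (T : E →L[ℝ] E) (w : Lp E 2 μ) (m : E) (hm : (∫ ω, w ω ∂μ) = m) :
    ∫ ω, ⟪T (w ω - m), w ω - m⟫ ∂μ
      = (∫ ω, ⟪T (w ω), w ω⟫ ∂μ) - ⟪T m, m⟫ := by
  have hw : Integrable (fun ω => w ω) μ := (Lp.memLp w).integrable one_le_two
  have h1 : Integrable (fun ω => ⟪T (w ω), w ω⟫) μ := integrableQuad T w w
  have i2 : Integrable (fun ω => ((innerSL ℝ m).comp T) (w ω)) μ :=
    ((innerSL ℝ m).comp T).integrable_comp hw
  have i3 : Integrable (fun ω => (innerSL ℝ (T m)) (w ω)) μ :=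
    (innerSL ℝ (T m)).integrable_comp hw
  have key : ∀ ω, ⟪T (w ω - m), w ω - m⟫ =
      ⟪T (w ω), w ω⟫ - ((innerSL ℝ m).comp T) (w ω) - (innerSL ℝ (T m)) (w ω)
        + ⟪T m, m⟫ := by
    intro ω
    simp only [map_sub, inner_sub_left, inner_sub_right, ContinuousLinearMap.comp_apply,
      innerSL_apply_apply]
    rw [real_inner_comm m (T (w ω))]
    ring
  have iA : Integrable (fun ω => ⟪T (w ω), w ω⟫ - ((innerSL ℝ m).comp T) (w ω)) μ := h1.sub i2
  have iB : Integrable (fun ω => ⟪T (w ω), w ω⟫ - ((innerSL ℝ m).comp T) (w ω)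
      - (innerSL ℝ (T m)) (w ω)) μ := iA.sub i3
  calc ∫ ω, ⟪T (w ω - m), w ω - m⟫ ∂μ
      = ∫ ω, (⟪T (w ω), w ω⟫ - ((innerSL ℝ m).comp T) (w ω)
          - (innerSL ℝ (T m)) (w ω) + ⟪T m, m⟫) ∂μ := by simp_rw [key]
    _ = (∫ ω, ⟪T (w ω), w ω⟫ ∂μ) - ⟪T m, m⟫ := by
        rw [integral_add iB (integrable_const _),
          integral_sub iA i3, integral_sub h1 i2,
          ContinuousLinearMap.integral_comp_comm _ hw,
          ContinuousLinearMap.integral_comp_comm _ hw, integral_const]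
        simp [hm, real_inner_comm]

/-- Strict convexity of the mean-field quadratic functional
`f(u) = E[⟨N₁u, u⟩] + ⟨N₂ E[u], E[u]⟩` on `L²(Ω; ℝᵏ)`, when `N₁`, `N₂` are
symmetric with `⟨N₁v, v⟩ ≥ δ|v|²` and `⟨(N₁+N₂)v, v⟩ ≥ δ|v|²` for some `δ > 0`. -/
theorem meanField_quadratic_strictConvex
    {Ω : Type*} [MeasurableSpace Ω] (μ : Measure Ω) [IsProbabilityMeasure μ]
    {k : ℕ} (δ : ℝ) (hδ : 0 < δ) (N₁ N₂ : Matrix (Fin k) (Fin k) ℝ)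
    (hN₁s : N₁.IsSymm) (hN₂s : N₂.IsSymm)
    (hN₁ : ∀ v : EuclideanSpace ℝ (Fin k),
      δ * ‖v‖ ^ 2 ≤ ⟪Matrix.toEuclideanLin N₁ v, v⟫)
    (hN₁₂ : ∀ v : EuclideanSpace ℝ (Fin k),
      δ * ‖v‖ ^ 2 ≤ ⟪Matrix.toEuclideanLin (N₁ + N₂) v, v⟫)
    (f : Lp (EuclideanSpace ℝ (Fin k)) 2 μ → ℝ)
    (hf : ∀ u : Lp (EuclideanSpace ℝ (Fin k)) 2 μ,
      f u = (∫ ω, ⟪Matrix.toEuclideanLin N₁ (u ω), u ω⟫ ∂μ)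
        + ⟪Matrix.toEuclideanLin N₂ (∫ ω, u ω ∂μ), ∫ ω, u ω ∂μ⟫) :
    StrictConvexOn ℝ (Set.univ : Set (Lp (EuclideanSpace ℝ (Fin k)) 2 μ)) f := by
  classical
  set T₁ : EuclideanSpace ℝ (Fin k) →L[ℝ] EuclideanSpace ℝ (Fin k) :=
    LinearMap.toContinuousLinearMap (Matrix.toEuclideanLin N₁) with hT₁def
  set T₂ : EuclideanSpace ℝ (Fin k) →L[ℝ] EuclideanSpace ℝ (Fin k) :=
    LinearMap.toContinuousLinearMap (Matrix.toEuclideanLin N₂) with hT₂def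
  have hT₁ : ∀ x, Matrix.toEuclideanLin N₁ x = T₁ x := fun _ => rfl
  have hT₂ : ∀ x, Matrix.toEuclideanLin N₂ x = T₂ x := fun _ => rfl
  refine ⟨convex_univ, ?_⟩
  intro u _ v _ huv s t hs ht hst
  -- integrability facts
  have hui : Integrable (fun ω => u ω) μ := (Lp.memLp u).integrable one_le_two
  have hvi : Integrable (fun ω => v ω) μ := (Lp.memLp v).integrable one_le_two
  set mu : EuclideanSpace ℝ (Fin k) := ∫ ω, u ω ∂μ with hmu
  set mv : EuclideanSpace ℝ (Fin k) := ∫ ω, v ω ∂μ with hmv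
  -- coeFn facts
  have hae : (fun ω => (s • u + t • v) ω) =ᵐ[μ] fun ω => s • u ω + t • v ω := by
    filter_upwards [Lp.coeFn_add (s • u) (t • v), Lp.coeFn_smul s u, Lp.coeFn_smul t v]
      with ω h1 h2 h3
    rw [h1, Pi.add_apply, h2, h3, Pi.smul_apply, Pi.smul_apply]
  have haew : (fun ω => (u - v) ω) =ᵐ[μ] fun ω => u ω - v ω := Lp.coeFn_sub u v
  -- means
  have hus : Integrable (fun ω => s • (u ω : EuclideanSpace ℝ (Fin k))) μ := hui.smul s
  have hvt : Integrable (fun ω => t • (v ω : EuclideanSpace ℝ (Fin k))) μ := hvi.smul t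
  have hmc : (∫ ω, (s • u + t • v) ω ∂μ) = s • mu + t • mv := by
    rw [integral_congr_ae hae, integral_add hus hvt, integral_smul, integral_smul]
  have hmw : (∫ ω, (u - v) ω ∂μ) = mu - mv := by
    rw [integral_congr_ae haew, integral_sub hui hvi]
  -- quadratic integral combination
  have Iuu := integrableQuad T₁ u u
  have Ivv := integrableQuad T₁ v v
  have Iww := integrableQuad T₁ (u - v) (u - v)
  have hIcombo : (∫ ω, ⟪T₁ ((s • u + t • v) ω), (s • u + t • v) ω⟫ ∂μ)
      = s * (∫ ω, ⟪T₁ (u ω), u ω⟫ ∂μ) + t * (∫ ω, ⟪T₁ (v ω), v ω⟫ ∂μ)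
        - s * t * (∫ ω, ⟪T₁ ((u - v) ω), (u - v) ω⟫ ∂μ) := by
    have e1 : (fun ω => ⟪T₁ ((s • u + t • v) ω), (s • u + t • v) ω⟫)
        =ᵐ[μ] fun ω => s * ⟪T₁ (u ω), u ω⟫ + t * ⟪T₁ (v ω), v ω⟫
          - s * t * ⟪T₁ ((u - v) ω), (u - v) ω⟫ := by
      filter_upwards [hae, haew] with ω h1 h2
      rw [h1, h2, quadCombo T₁ (u ω) (v ω) s t hst]
    have iA : Integrable (fun ω => s * ⟪T₁ (u ω), u ω⟫ + t * ⟪T₁ (v ω), v ω⟫) μ :=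
      (Iuu.const_mul s).add (Ivv.const_mul t)
    rw [integral_congr_ae e1, integral_sub iA (Iww.const_mul (s * t)),
      integral_add (Iuu.const_mul s) (Ivv.const_mul t),
      integral_const_mul, integral_const_mul, integral_const_mul]
  -- positivity of the quadratic form at w = u - v
  set w : Lp (EuclideanSpace ℝ (Fin k)) 2 μ := u - v with hwdef
  have hw0 : w ≠ 0 := sub_ne_zero.mpr huv
  have hQpos : 0 < (∫ ω, ⟪T₁ (w ω), w ω⟫ ∂μ) + ⟪T₂ (mu - mv), mu - mv⟫ := by
    have hsq : Integrable (fun ω => ‖w ω‖ ^ 2) μ := by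
      refine (MeasureTheory.L2.integrable_inner (𝕜 := ℝ) w w).congr ?_
      filter_upwards with ω
      rw [real_inner_self_eq_norm_sq]
    rcases eq_or_ne (mu - mv) 0 with hm | hm
    · -- mean of w is zero
      rw [hm]
      have h1 : δ * ‖w‖ ^ 2 ≤ ∫ ω, ⟪T₁ (w ω), w ω⟫ ∂μ := by
        have h2 : (∫ ω, δ * ‖w ω‖ ^ 2 ∂μ) ≤ ∫ ω, ⟪T₁ (w ω), w ω⟫ ∂μ := by
          refine integral_mono (hsq.const_mul δ) (integrableQuad T₁ w w) ?_
          intro ω; exact hN₁ (w ω)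
        have h3 : (∫ ω, δ * ‖w ω‖ ^ 2 ∂μ) = δ * ‖w‖ ^ 2 := by
          rw [integral_const_mul]
          congr 1
          have : (∫ ω, ‖w ω‖ ^ 2 ∂μ) = ⟪w, w⟫ := by
            rw [MeasureTheory.L2.inner_def]
            refine integral_congr_ae ?_
            filter_upwards with ω
            rw [real_inner_self_eq_norm_sq]
          rw [this, real_inner_self_eq_norm_sq]
        linarith
      have hwn : 0 < ‖w‖ := norm_pos_iff.mpr hw0
      have : 0 < δ * ‖w‖ ^ 2 := by positivity
      simp only [map_zero, inner_zero_left]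
      linarith
    · -- mean of w is nonzero
      set m : EuclideanSpace ℝ (Fin k) := mu - mv with hmdef
      have hmw' : (∫ ω, w ω ∂μ) = m := hmw
      have hshift := shiftIdentity T₁ w m hmw'
      have hpos1 : 0 ≤ ∫ ω, ⟪T₁ (w ω - m), w ω - m⟫ ∂μ := by
        refine integral_nonneg fun ω => ?_
        simp only [Pi.zero_apply]
        have h := hN₁ (w ω - m)
        rw [hT₁] at h
        have h0 : (0 : ℝ) ≤ δ * ‖w ω - m‖ ^ 2 := by positivity
        linarith
      have hpos2 : δ * ‖m‖ ^ 2 ≤ ⟪T₁ m, m⟫ + ⟪T₂ m, m⟫ := by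
        have h12 := hN₁₂ m
        have : Matrix.toEuclideanLin (N₁ + N₂) m
            = Matrix.toEuclideanLin N₁ m + Matrix.toEuclideanLin N₂ m := by
          rw [map_add, LinearMap.add_apply]
        rw [this, inner_add_left, hT₁ m, hT₂ m] at h12
        exact h12
      have hmn : 0 < ‖m‖ := norm_pos_iff.mpr hm
      have hmp : 0 < δ * ‖m‖ ^ 2 := by positivity
      linarith
  -- put everything together
  have hfc := hf (s • u + t • v)
  have hfu := hf u
  have hfv := hf v
  simp only [hT₁, hT₂] at hfc hfu hfv
  rw [← hmu] at hfu
  rw [← hmv] at hfv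
  rw [hfc, hfu, hfv, hmc, hIcombo, quadCombo T₂ mu mv s t hst]
  simp only [smul_eq_mul]
  have hst' : 0 < s * t := mul_pos hs ht
  nlinarith [mul_pos hst' hQpos]
end
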